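/- With Λ_u(x;y) as above, the kernel is annihilated by A_N(u): A_N(u) Λ_u(x_1,…,x_N; y_1,…,y_{N−1}) = 0. -/

import Mathlib

noncomputable section

open Complex

/-- Complex-valued functions of countably many real coordinates `x 1, x 2, …`. -/
abbrev TodaFun := (ℕ → ℝ) → ℂ

/-- The momentum operator of the `n`-th particle, `p_n = −iħ ∂/∂x_n`. -/
def pOp (hbar : ℝ) (n : ℕ) (f : TodaFun) : TodaFun :=
  fun x => (-Complex.I * hbar) * deriv (fun t : ℝ => f (Function.update x n t)) (x n)

/-- The Lax matrix `L_n(u) = [[u − p_n, e^{−x_n}], [−e^{x_n}, 0]]`,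
as a 2×2 matrix of operators on functions. -/
def Lax (hbar : ℝ) (u : ℂ) (n : ℕ) : Fin 2 → Fin 2 → (TodaFun → TodaFun) :=
  ![![fun f x => u * f x - pOp hbar n f x, fun f x => (Real.exp (-(x n)) : ℂ) * f x],
    ![fun f x => (-Real.exp (x n) : ℝ) * f x, fun _ _ => 0]]

/-- Product of 2×2 matrices of operators: `(AB)_{ij} f = A_{i0}(B_{0j} f) + A_{i1}(B_{1j} f)`. -/
def mulOp (A B : Fin 2 → Fin 2 → (TodaFun → TodaFun)) : Fin 2 → Fin 2 → (TodaFun → TodaFun) :=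
  fun i j f x => A i 0 (B 0 j f) x + A i 1 (B 1 j f) x

/-- The monodromy matrix `T_N(u) = L_N(u) ⋯ L_1(u)`, with `T_0 = Id`. -/
def Tmat (hbar : ℝ) (u : ℂ) : ℕ → (Fin 2 → Fin 2 → (TodaFun → TodaFun))
  | 0 => ![![fun f => f, fun _ _ => 0], ![fun _ _ => 0, fun f => f]]
  | (n + 1) => mulOp (Lax hbar u (n + 1)) (Tmat hbar u n)

/-- `A_N(u)`: the (1,1) entry of the monodromy matrix. -/
def Aop (hbar : ℝ) (u : ℂ) (N : ℕ) : TodaFun → TodaFun := Tmat hbar u N 0 0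

/-- `B_N(u)`: the (1,2) entry of the monodromy matrix. -/
def Bop (hbar : ℝ) (u : ℂ) (N : ℕ) : TodaFun → TodaFun := Tmat hbar u N 0 1

/-- `C_N(u)`: the (2,1) entry of the monodromy matrix. -/
def Cop (hbar : ℝ) (u : ℂ) (N : ℕ) : TodaFun → TodaFun := Tmat hbar u N 1 0

/-- `D_N(u)`: the (2,2) entry of the monodromy matrix. -/
def Dop (hbar : ℝ) (u : ℂ) (N : ℕ) : TodaFun → TodaFun := Tmat hbar u N 1 1

/-- The kernel
`Λ_u(x;y) = exp{(i/ħ)u(Σ_{n=1}^N x_n − Σ_{n=1}^{N−1} y_n)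
  − (1/ħ)Σ_{n=1}^{N−1}(e^{y_n−x_{n+1}} + e^{x_n−y_n})}`. -/
def LamKer (hbar : ℝ) (N : ℕ) (u : ℂ) (y : ℕ → ℝ) : TodaFun :=
  fun x => Complex.exp (Complex.I * u / hbar
    * (((∑ n ∈ Finset.Icc 1 N, x n) - ∑ n ∈ Finset.Icc 1 (N - 1), y n : ℝ) : ℂ)
    - ((1 / hbar) * ∑ n ∈ Finset.Icc 1 (N - 1),
        (Real.exp (y n - x (n + 1)) + Real.exp (x n - y n)) : ℝ))

/-! ### Auxiliary lemmas -/

lemma lam_hasDeriv (hbar : ℝ) (u : ℂ) (N : ℕ) (y x : ℕ → ℝ) (n : ℕ)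
    (h1 : 1 ≤ n) (h2 : n ≤ N) (t : ℝ) :
    HasDerivAt (fun s => LamKer hbar N u y (Function.update x n s))
      ((Complex.I * u / hbar - ((1/hbar) * ((if 2 ≤ n then -Real.exp (y (n-1) - t) else 0)
          + (if n ≤ N-1 then Real.exp (t - y n) else 0)) : ℝ))
        * LamKer hbar N u y (Function.update x n t)) t := by
  have hsum1 : HasDerivAt (fun s : ℝ => ∑ j ∈ Finset.Icc 1 N, Function.update x n s j) 1 t := by
    have h : HasDerivAt (fun s : ℝ => ∑ j ∈ Finset.Icc 1 N, Function.update x n s j)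
        (∑ j ∈ Finset.Icc 1 N, if j = n then 1 else 0) t := by
      apply HasDerivAt.fun_sum
      intro j hj
      rcases eq_or_ne j n with rfl | hne
      · simp only [Function.update_self, if_pos rfl]; exact hasDerivAt_id t
      · simp only [Function.update_of_ne hne, if_neg hne]; exact hasDerivAt_const t _
    simpa [Finset.sum_ite_eq' _ n (fun _ => (1:ℝ)), Finset.mem_Icc, h1, h2] using h
  have hsum2 : HasDerivAt (fun s : ℝ => ∑ j ∈ Finset.Icc 1 (N-1),
      (Real.exp (y j - Function.update x n s (j+1)) + Real.exp (Function.update x n s j - y j)))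
      ((if 2 ≤ n then -Real.exp (y (n-1) - t) else 0)
        + (if n ≤ N-1 then Real.exp (t - y n) else 0)) t := by
    have h : HasDerivAt (fun s : ℝ => ∑ j ∈ Finset.Icc 1 (N-1),
        (Real.exp (y j - Function.update x n s (j+1)) + Real.exp (Function.update x n s j - y j)))
        (∑ j ∈ Finset.Icc 1 (N-1), ((if j + 1 = n then -Real.exp (y j - t) else 0)
          + (if j = n then Real.exp (t - y j) else 0))) t := by
      apply HasDerivAt.fun_sum
      intro j hj
      apply HasDerivAt.fun_add
      · rcases eq_or_ne (j+1) n with he | hne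
        · rw [if_pos he]
          subst he
          simp only [Function.update_self]
          have := ((hasDerivAt_id t).const_sub (y j)).exp
          simpa using this
        · rw [if_neg hne]
          simp only [Function.update_of_ne hne]
          exact hasDerivAt_const t _
      · rcases eq_or_ne j n with rfl | hne
        · rw [if_pos rfl]
          simp only [Function.update_self]
          have := ((hasDerivAt_id t).sub_const (y j)).exp
          simpa using this
        · rw [if_neg hne]
          simp only [Function.update_of_ne hne]
          exact hasDerivAt_const t _
    have e1 : ∑ j ∈ Finset.Icc 1 (N-1), ((if j + 1 = n then -Real.exp (y j - t) else 0)
          + (if j = n then Real.exp (t - y j) else 0))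
        = (if 2 ≤ n then -Real.exp (y (n-1) - t) else 0)
          + (if n ≤ N-1 then Real.exp (t - y n) else 0) := by
      rw [Finset.sum_add_distrib]
      congr 1
      · have hiff : ∀ j : ℕ, (j + 1 = n) ↔ (j = n - 1) := fun j => by omega
        simp only [hiff]
        rw [Finset.sum_ite_eq' _ (n-1) (fun j => -Real.exp (y j - t))]
        by_cases hc : 2 ≤ n
        · rw [if_pos (by simp only [Finset.mem_Icc]; omega), if_pos hc]
        · rw [if_neg (by simp only [Finset.mem_Icc]; omega), if_neg hc]
      · rw [Finset.sum_ite_eq' _ n (fun j => Real.exp (t - y j))]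
        by_cases hc : n ≤ N - 1
        · rw [if_pos (by simp only [Finset.mem_Icc]; omega), if_pos hc]
        · rw [if_neg (by simp only [Finset.mem_Icc]; omega), if_neg hc]
    rw [← e1]
    exact h
  have hΦ : HasDerivAt (fun s : ℝ => Complex.I * u / hbar
      * (((∑ j ∈ Finset.Icc 1 N, Function.update x n s j) - ∑ j ∈ Finset.Icc 1 (N-1), y j : ℝ) : ℂ)
      - ((1 / hbar) * ∑ j ∈ Finset.Icc 1 (N-1),
          (Real.exp (y j - Function.update x n s (j+1)) + Real.exp (Function.update x n s j - y j)) : ℝ))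
      (Complex.I * u / hbar - ((1/hbar) * ((if 2 ≤ n then -Real.exp (y (n-1) - t) else 0)
          + (if n ≤ N-1 then Real.exp (t - y n) else 0)) : ℝ)) t := by
    have d1 := ((hsum1.sub_const (∑ j ∈ Finset.Icc 1 (N-1), y j)).ofReal_comp).const_mul
      (Complex.I * u / hbar)
    have d2 := (hsum2.const_mul ((1:ℝ)/hbar)).ofReal_comp
    have := d1.fun_sub d2
    simpa [mul_comm] using this
  have := hΦ.cexp
  simpa [LamKer, mul_comm] using this

lemma step_lemma (hbar : ℝ) (hh : 0 < hbar) (u : ℂ) (N : ℕ) (y x : ℕ → ℝ) (n : ℕ)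
    (h1 : 1 ≤ n) (h2 : n ≤ N) (a : ℂ) (f : TodaFun)
    (hf : ∀ t, f (Function.update x n t) = a * LamKer hbar N u y (Function.update x n t)) :
    u * f x - pOp hbar n f x
      = a * (-Complex.I) * (((if 2 ≤ n then -Real.exp (y (n-1) - x n) else 0)
          + (if n ≤ N-1 then Real.exp (x n - y n) else 0) : ℝ) : ℂ)
        * LamKer hbar N u y x := by
  have hd := lam_hasDeriv hbar u N y x n h1 h2 (x n)
  have hfd : HasDerivAt (fun t => f (Function.update x n t))
      (a * ((Complex.I * u / hbar - ((1/hbar) * ((if 2 ≤ n then -Real.exp (y (n-1) - x n) else 0)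
          + (if n ≤ N-1 then Real.exp (x n - y n) else 0)) : ℝ))
        * LamKer hbar N u y (Function.update x n (x n)))) (x n) := by
    have : (fun t => f (Function.update x n t))
        = fun t => a * LamKer hbar N u y (Function.update x n t) := funext hf
    rw [this]
    exact hd.const_mul a
  have hfx : f x = a * LamKer hbar N u y x := by
    have := hf (x n)
    rwa [Function.update_eq_self] at this
  have hp : pOp hbar n f x = (-Complex.I * hbar) *
      (a * ((Complex.I * u / hbar - ((1/hbar) * ((if 2 ≤ n then -Real.exp (y (n-1) - x n) else 0)
          + (if n ≤ N-1 then Real.exp (x n - y n) else 0)) : ℝ))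
        * LamKer hbar N u y x)) := by
    rw [pOp, hfd.deriv, Function.update_eq_self]
  rw [hp, hfx]
  have hb : (hbar : ℂ) ≠ 0 := by exact_mod_cast hh.ne'
  set W : ℝ := (if 2 ≤ n then -Real.exp (y (n-1) - x n) else 0)
          + (if n ≤ N-1 then Real.exp (x n - y n) else 0) with hW
  set L : ℂ := LamKer hbar N u y x
  push_cast
  field_simp
  ring_nf
  rw [Complex.I_sq]
  ring

lemma Tmat_A_succ (hbar : ℝ) (u : ℂ) (k : ℕ) (f : TodaFun) (x : ℕ → ℝ) :
    Tmat hbar u (k+1) 0 0 f x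
      = (u * (Tmat hbar u k 0 0 f) x - pOp hbar (k+1) (Tmat hbar u k 0 0 f) x)
        + (Real.exp (-(x (k+1))) : ℂ) * Tmat hbar u k 1 0 f x := by
  simp [Tmat, mulOp, Lax]

lemma Tmat_C_succ (hbar : ℝ) (u : ℂ) (k : ℕ) (f : TodaFun) (x : ℕ → ℝ) :
    Tmat hbar u (k+1) 1 0 f x
      = ((-Real.exp (x (k+1)) : ℝ) : ℂ) * Tmat hbar u k 0 0 f x := by
  simp [Tmat, mulOp, Lax]

lemma Tmat_A_zero (hbar : ℝ) (u : ℂ) : Tmat hbar u 0 0 0 = fun f => f := rfl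

lemma Tmat_C_zero (hbar : ℝ) (u : ℂ) (f : TodaFun) (x : ℕ → ℝ) :
    Tmat hbar u 0 1 0 f x = 0 := by
  simp [Tmat]

lemma sum_update_of_lt (x y : ℕ → ℝ) (n m : ℕ) (t : ℝ) (h : m < n) :
    ∑ j ∈ Finset.Icc 1 m, (Function.update x n t j - y j)
      = ∑ j ∈ Finset.Icc 1 m, (x j - y j) := by
  refine Finset.sum_congr rfl fun j hj => ?_
  rw [Function.update_of_ne (Nat.ne_of_lt (lt_of_le_of_lt (Finset.mem_Icc.mp hj).2 h))]

lemma A_lam (hbar : ℝ) (hh : 0 < hbar) (u : ℂ) (N : ℕ) (y : ℕ → ℝ) :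
    ∀ m, m ≤ N - 1 → ∀ x : ℕ → ℝ,
      Tmat hbar u m 0 0 (LamKer hbar N u y) x
        = (-Complex.I)^m * ((Real.exp (∑ j ∈ Finset.Icc 1 m, (x j - y j)) : ℝ) : ℂ)
          * LamKer hbar N u y x := by
  intro m
  induction m using Nat.strong_induction_on with
  | _ m IH =>
    match m with
    | 0 =>
      intro _ x
      simp [Tmat_A_zero]
    | 1 =>
      intro hm x
      have hN1 : 1 ≤ N - 1 := hm
      rw [Tmat_A_succ]
      simp only [Nat.zero_add, Tmat_A_zero, Tmat_C_zero, mul_zero, add_zero]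
      have hstep := step_lemma hbar hh u N y x 1 le_rfl (by omega) 1 (LamKer hbar N u y)
        (fun t => by rw [one_mul])
      rw [hstep]
      rw [if_neg (by omega), if_pos hN1]
      simp [Finset.Icc_self]
    | (k+2) =>
      intro hm x
      have hk1 : k + 1 ≤ N - 1 := by omega
      have hk : k ≤ N - 1 := by omega
      have IH1 := IH (k+1) (by omega) hk1
      have IH0 := IH k (by omega) hk x
      rw [Tmat_A_succ, Tmat_C_succ, IH0]
      set a : ℂ := (-Complex.I)^(k+1)
        * ((Real.exp (∑ j ∈ Finset.Icc 1 (k+1), (x j - y j)) : ℝ) : ℂ) with ha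
      have hf : ∀ t, Tmat hbar u (k+1) 0 0 (LamKer hbar N u y) (Function.update x (k+2) t)
          = a * LamKer hbar N u y (Function.update x (k+2) t) := by
        intro t
        rw [IH1 (Function.update x (k+2) t), sum_update_of_lt x y (k+2) (k+1) t (by omega)]
      have hstep := step_lemma hbar hh u N y x (k+2) (by omega) (by omega) a
        (Tmat hbar u (k+1) 0 0 (LamKer hbar N u y)) hf
      rw [hstep, if_pos (by omega), if_pos (by omega)]
      show _ = (-Complex.I)^(k+2) * _ * _
      rw [ha]
      rw [Finset.sum_Icc_succ_top (by omega : 1 ≤ k+2),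
          Finset.sum_Icc_succ_top (by omega : 1 ≤ k+1)]
      simp only [show k + 2 - 1 = k + 1 from rfl]
      rw [pow_succ, pow_succ]
      simp only [Real.exp_add, Real.exp_sub, Real.exp_neg]
      push_cast
      have e1 : (Real.exp (x (k+1)) : ℂ) ≠ 0 := by exact_mod_cast (Real.exp_ne_zero _)
      have e2 : (Real.exp (y (k+1)) : ℂ) ≠ 0 := by exact_mod_cast (Real.exp_ne_zero _)
      have e3 : (Real.exp (x (k+2)) : ℂ) ≠ 0 := by exact_mod_cast (Real.exp_ne_zero _)
      have e4 : (Real.exp (y (k+2)) : ℂ) ≠ 0 := by exact_mod_cast (Real.exp_ne_zero _)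
      field_simp
      ring_nf
      rw [Complex.I_sq]
      ring

theorem Aop_annihilates_LamKer (hbar : ℝ) (hh : 0 < hbar) (u : ℂ) (N : ℕ) (hN : 1 ≤ N)
    (y : ℕ → ℝ) :
    ∀ x : ℕ → ℝ, Aop hbar u N (LamKer hbar N u y) x = 0 := by
  intro x
  rw [Aop]
  match N, hN with
  | 1, _ =>
    rw [Tmat_A_succ]
    simp only [Nat.zero_add, Tmat_A_zero, Tmat_C_zero, mul_zero, add_zero]
    have hstep := step_lemma hbar hh u 1 y x 1 le_rfl le_rfl 1 (LamKer hbar 1 u y)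
      (fun t => by rw [one_mul])
    rw [hstep]
    rw [if_neg (by omega), if_neg (by omega)]
    simp
  | (k+2), _ =>
    have hk1 : k + 1 ≤ (k+2) - 1 := by omega
    have hk : k ≤ (k+2) - 1 := by omega
    have IH1 := A_lam hbar hh u (k+2) y (k+1) hk1
    have IH0 := A_lam hbar hh u (k+2) y k hk x
    rw [Tmat_A_succ, Tmat_C_succ, IH0]
    set a : ℂ := (-Complex.I)^(k+1)
      * ((Real.exp (∑ j ∈ Finset.Icc 1 (k+1), (x j - y j)) : ℝ) : ℂ) with ha
    have hf : ∀ t, Tmat hbar u (k+1) 0 0 (LamKer hbar (k+2) u y) (Function.update x (k+2) t)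
        = a * LamKer hbar (k+2) u y (Function.update x (k+2) t) := by
      intro t
      rw [IH1 (Function.update x (k+2) t), sum_update_of_lt x y (k+2) (k+1) t (by omega)]
    have hstep := step_lemma hbar hh u (k+2) y x (k+2) (by omega) le_rfl a
      (Tmat hbar u (k+1) 0 0 (LamKer hbar (k+2) u y)) hf
    rw [hstep, if_pos (by omega), if_neg (by omega)]
    rw [ha]
    rw [Finset.sum_Icc_succ_top (by omega : 1 ≤ k+1)]
    simp only [show k + 2 - 1 = k + 1 from rfl]
    rw [pow_succ]
    simp only [Real.exp_add, Real.exp_sub, Real.exp_neg]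
    push_cast
    have e1 : (Real.exp (x (k+1)) : ℂ) ≠ 0 := by exact_mod_cast (Real.exp_ne_zero _)
    have e2 : (Real.exp (y (k+1)) : ℂ) ≠ 0 := by exact_mod_cast (Real.exp_ne_zero _)
    have e3 : (Real.exp (x (k+2)) : ℂ) ≠ 0 := by exact_mod_cast (Real.exp_ne_zero _)
    field_simp
    ring_nf
    rw [Complex.I_sq]
    ring

end
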